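/- There exists a universal constant C > 0 with the following property. Let w ∈ ℝ^n, let z be a real random variable with E[z²] < ∞, and suppose the additive noise mechanism M(x) := wᵀx + z (for x ∈ ℝ^n) is (ε,δ)-differentially private for some 0 < ε ≤ 1/2 and 0 ≤ δ ≤ 1. Then (E[z²])^{1/2} ≥ (1 − δ') · ‖w‖_∞ / (C ε), where δ' = (e^{1/2} − 1) δ / (e^ε − 1). -/

import Mathlib

open MeasureTheory Matrix
open scoped ENNReal

noncomputable section

namespace DPPaper

variable {ι κ : Type*}

/-- Two inputs `x, x' : ι → ℝ` are neighboring if `‖x - x'‖₁ ≤ 1`. -/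
def Neighboring [Fintype ι] (x x' : ι → ℝ) : Prop :=
  ∑ i, |x i - x' i| ≤ 1

/-- A mechanism `M` (a map from inputs to probability measures on an output space `Ω`)
is `(ε,δ)`-differentially private if for all neighboring inputs and all measurable sets `S`,
`M x S ≤ e^ε · M x' S + δ`. -/
def IsDP [Fintype ι] {Ω : Type*} [MeasurableSpace Ω]
    (M : (ι → ℝ) → Measure Ω) (ε δ : ℝ) : Prop :=
  ∀ x x' : ι → ℝ, Neighboring x x' → ∀ S : Set Ω, MeasurableSet S →
    M x S ≤ ENNReal.ofReal (Real.exp ε) * M x' S + ENNReal.ofReal δ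

/-- The `ℓ_p^p`-error of a mechanism `M` on the query matrix `A`:
`sup_x (E_{Y ~ M x} [ ‖Y - A x‖_p^p ])^{1/p}`, valued in `ℝ≥0∞`. -/
def errLp [Fintype ι] [Fintype κ] (M : (ι → ℝ) → Measure (κ → ℝ))
    (A : Matrix κ ι ℝ) (p : ℝ) : ℝ≥0∞ :=
  ⨆ x : ι → ℝ,
    (∫⁻ y, ENNReal.ofReal (∑ i, |y i - A.mulVec x i| ^ p) ∂(M x)) ^ (1 / p)

/-- The `q`-trace of a square matrix: `(∑ i, U i i ^ q)^{1/q}`. -/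
def trq [Fintype κ] (q : ℝ) (U : Matrix κ κ ℝ) : ℝ :=
  (∑ i, (U i i) ^ q) ^ (1 / q)

/-- The `1 → 2` operator norm of a matrix: the largest `ℓ₂`-norm of a column. -/
def norm12 [Fintype ι] [Fintype κ] (R : Matrix κ ι ℝ) : ℝ :=
  ⨆ j : ι, Real.sqrt (∑ i, (R i j) ^ 2)

/-- The factorization norm `γ_{(p)}(A)`. -/
def gammaP [Fintype ι] [Fintype κ] (p : ℝ) (A : Matrix κ ι ℝ) : ℝ :=
  sInf { c : ℝ | ∃ (k : ℕ) (L : Matrix κ (Fin k) ℝ) (R : Matrix (Fin k) ι ℝ),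
    L * R = A ∧ c = Real.sqrt (trq (p / 2) (L * Lᵀ)) * norm12 R }

/-- The Schatten-1 norm of a matrix: the trace of the PSD square root of `Aᵀ * A`,
i.e. the sum of the singular values of `A`. -/
def schatten1 [Fintype ι] [Fintype κ] [DecidableEq ι] (A : Matrix κ ι ℝ) : ℝ :=
  (((Matrix.posSemidef_conjTranspose_mul_self A).1.eigenvectorUnitary : Matrix ι ι ℝ) *
    diagonal ((RCLike.ofReal : ℝ → ℝ) ∘ Real.sqrt ∘
      (Matrix.posSemidef_conjTranspose_mul_self A).1.eigenvalues) *
    (star (Matrix.posSemidef_conjTranspose_mul_self A).1.eigenvectorUnitary : Matrix ι ι ℝ)).trace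

/-- The sensitivity polytope `A B₁^n = {A x : ‖x‖₁ ≤ 1}`. -/
def sensPolytope [Fintype ι] (A : Matrix κ ι ℝ) : Set (κ → ℝ) :=
  {v | ∃ x : ι → ℝ, (∑ i, |x i|) ≤ 1 ∧ v = A.mulVec x}

/-- The width of a set `K` in direction `θ`. -/
def width [Fintype κ] (K : Set (κ → ℝ)) (θ : κ → ℝ) : ℝ :=
  sSup ((fun v => ∑ i, θ i * v i) '' K) - sInf ((fun v => ∑ i, θ i * v i) '' K)

/-- `κ(A)`: the minimal width of the sensitivity polytope over all unit directions. -/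
def kappa [Fintype ι] [Fintype κ] (A : Matrix κ ι ℝ) : ℝ :=
  sInf { c : ℝ | ∃ θ : κ → ℝ, (∑ i, (θ i) ^ 2) = 1 ∧ c = width (sensPolytope A) θ }

/-- The prefix-sum (continual counting) matrix: lower-triangular all ones. -/
def Aprefix (n : ℕ) : Matrix (Fin n) (Fin n) ℝ :=
  fun i j => if j ≤ i then 1 else 0

/-- The covariance matrix of a measure on `κ → ℝ`. -/
def covMatrix [Fintype κ] (μ : Measure (κ → ℝ)) : Matrix κ κ ℝ :=
  fun i j => ∫ y, (y i - ∫ y', y' i ∂μ) * (y j - ∫ y', y' j ∂μ) ∂μ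

/-- The parity query matrix `Q_{d,w}`: rows indexed by `w`-element subsets `P` of `{1,…,d}`,
columns indexed by points of `{-1,1}^d` (encoded as `Fin d → Bool`), entry `∏_{i ∈ P} x_i`. -/
def parityMatrix (d w : ℕ) : Matrix {P : Finset (Fin d) // P.card = w} (Fin d → Bool) ℝ :=
  fun P b => ∏ i ∈ P.1, (if b i then (1 : ℝ) else -1)

/-- The Hadamard matrices: `H_0 = [1]`, `H_{d+1} = [[H_d, H_d], [H_d, -H_d]]`. -/
def Hadamard : (d : ℕ) → Matrix (Fin (2 ^ d)) (Fin (2 ^ d)) ℝ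
  | 0 => fun _ _ => 1
  | (d + 1) =>
    Matrix.reindex
      (finSumFinEquiv.trans (finCongr (by rw [pow_succ, mul_two])))
      (finSumFinEquiv.trans (finCongr (by rw [pow_succ, mul_two])))
      (Matrix.fromBlocks (Hadamard d) (Hadamard d) (Hadamard d) (-(Hadamard d)))

end DPPaper

open DPPaper

private lemma dp_toReal {μ₁ μ₂ : ℝ≥0∞} (h2 : μ₂ ≠ ⊤) {E d : ℝ} (hE : 0 ≤ E) (hd : 0 ≤ d)
    (h : μ₁ ≤ ENNReal.ofReal E * μ₂ + ENNReal.ofReal d) :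
    μ₁.toReal ≤ E * μ₂.toReal + d := by
  have hfin : ENNReal.ofReal E * μ₂ + ENNReal.ofReal d ≠ ⊤ :=
    ENNReal.add_ne_top.mpr ⟨ENNReal.mul_ne_top ENNReal.ofReal_ne_top h2,
      ENNReal.ofReal_ne_top⟩
  have key := ENNReal.toReal_mono hfin h
  rwa [ENNReal.toReal_add (ENNReal.mul_ne_top ENNReal.ofReal_ne_top h2)
    ENNReal.ofReal_ne_top, ENNReal.toReal_mul, ENNReal.toReal_ofReal hE,
    ENNReal.toReal_ofReal hd] at key

private lemma group_priv {E d : ℝ} (hE : 0 < E) (hd : 0 ≤ d) (q : ℕ → ℝ)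
    (hq : ∀ t, 0 ≤ q t) (hstep : ∀ t, q t ≤ E * q (t + 1) + d) :
    ∀ t : ℕ, q 0 ≤ E ^ t * q t + d * ∑ i ∈ Finset.range t, E ^ i := by
  intro t
  induction t with
  | zero => simp
  | succ t ih =>
    have h1 := hstep t
    have h2 : (0:ℝ) < E ^ t := pow_pos hE t
    calc q 0 ≤ E ^ t * q t + d * ∑ i ∈ Finset.range t, E ^ i := ih
      _ ≤ E ^ t * (E * q (t+1) + d) + d * ∑ i ∈ Finset.range t, E ^ i := by
        have h3 := mul_le_mul_of_nonneg_left h1 h2.le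
        linarith
      _ = E ^ (t+1) * q (t+1) + d * ∑ i ∈ Finset.range (t+1), E ^ i := by
        rw [Finset.sum_range_succ]; ring


set_option maxHeartbeats 1000000 in
/-- a one-dimensional (ε,δ)-DP additive noise mechanism for a single
  linear query w must have noise second moment ≳ ((1-δ')‖w‖_∞/ε)². -/
theorem one_dim_additive_noise_lower_bound :
    ∃ C : ℝ, 0 < C ∧
      ∀ (n : ℕ) (w : Fin n → ℝ) (ν : Measure ℝ), IsProbabilityMeasure ν →
        Integrable (fun z => z ^ 2) ν →
        ∀ ε δ : ℝ, 0 < ε → ε ≤ 1 / 2 → 0 ≤ δ → δ ≤ 1 →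
        IsDP (fun x : Fin n → ℝ => Measure.map (fun z => (∑ i, w i * x i) + z) ν) ε δ →
        Real.sqrt (∫ z, z ^ 2 ∂ν) ≥
          (1 - (Real.exp (1 / 2) - 1) * δ / (Real.exp ε - 1)) * (⨆ i, |w i|) / (C * ε) := by 
  refine ⟨100, by norm_num, ?_⟩
  intro n w ν hν hint ε δ hε hε2 hδ hδ1 hDP
  set m := ⨆ i, |w i| with hm_def
  have hm0 : 0 ≤ m := Real.iSup_nonneg fun i => abs_nonneg _
  set δ' : ℝ := (Real.exp (1 / 2) - 1) * δ / (Real.exp ε - 1) with hδ'_def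
  have hexpε1 : 1 < Real.exp ε := Real.one_lt_exp_iff.mpr hε
  have hexph1 : 1 ≤ Real.exp (1/2 : ℝ) := Real.one_le_exp (by norm_num)
  have hexph2 : Real.exp (1/2 : ℝ) ≤ 2 := by
    nlinarith [Real.exp_one_lt_d9, Real.exp_pos (1/2 : ℝ),
      (Real.exp_add (1/2) (1/2)).symm]
  have hδ'0 : 0 ≤ δ' :=
    div_nonneg (mul_nonneg (by linarith) hδ) (by linarith)
  have hsq0 : 0 ≤ ∫ z, z ^ 2 ∂ν := integral_nonneg fun z => sq_nonneg z
  set σsq := ∫ z, z ^ 2 ∂ν with hσsq_def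
  -- trivial cases
  rcases le_or_gt (1 - δ') 0 with hδ'1 | hδ'1
  · have : (1 - δ') * m / (100 * ε) ≤ 0 :=
      div_nonpos_of_nonpos_of_nonneg (mul_nonpos_of_nonpos_of_nonneg hδ'1 hm0)
        (by linarith)
    exact le_trans this (Real.sqrt_nonneg _)
  rcases eq_or_lt_of_le hm0 with hm | hm
  · rw [← hm]; simpa using Real.sqrt_nonneg _
  -- main case
  have hne : Nonempty (Fin n) := by
    by_contra h
    rw [not_nonempty_iff] at h
    have hz : m = 0 := by rw [hm_def]; exact Real.iSup_of_isEmpty _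
    rw [hz] at hm
    exact lt_irrefl 0 hm
  obtain ⟨j, -, hj⟩ := Finset.exists_max_image Finset.univ (fun i => |w i|)
    ⟨hne.some, Finset.mem_univ _⟩
  have hjm : |w j| = m := by
    apply le_antisymm
    · rw [hm_def]
      exact le_ciSup (f := fun i => |w i|) (Set.Finite.bddAbove (Set.finite_range _)) j
    · exact ciSup_le fun i => hj i (Finset.mem_univ i)
  set a := w j with ha_def
  have ha2 : a ^ 2 = m ^ 2 := by rw [← sq_abs, hjm]
  set k := Nat.floor (1 / (2 * ε)) with hk_def
  have ht1 : (1:ℝ) ≤ 1 / (2 * ε) := by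
    rw [le_div_iff₀ (by linarith)]; linarith
  have hk_lb : 1 / (2 * ε) / 2 ≤ (k : ℝ) := by
    rcases le_or_gt (1 / (2 * ε)) 2 with h | h
    · have h1 : (1:ℕ) ≤ k := Nat.le_floor (by exact_mod_cast ht1)
      have h2 : (1:ℝ) ≤ (k : ℝ) := by exact_mod_cast h1
      linarith
    · have := Nat.sub_one_lt_floor (1 / (2 * ε))
      rw [← hk_def] at this
      linarith
  have hk_ub : (k:ℝ) * ε ≤ 1 / 2 := by
    have h1 : (k:ℝ) ≤ 1 / (2 * ε) := Nat.floor_le (by positivity)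
    calc (k:ℝ) * ε ≤ (1 / (2 * ε)) * ε := mul_le_mul_of_nonneg_right h1 hε.le
      _ = 1 / 2 := by field_simp
  have hk4 : m / (4 * ε) ≤ m * k := by
    have h2 : 1 / (4 * ε) ≤ (k:ℝ) := by
      have h3 : 1 / (2 * ε) / 2 = 1 / (4 * ε) := by ring
      linarith [h3 ▸ hk_lb]
    calc m / (4 * ε) = m * (1 / (4 * ε)) := by ring
      _ ≤ m * k := mul_le_mul_of_nonneg_left h2 hm0
  -- the window
  set T : ℝ := m * k / 4 with hT_def
  have hT0 : 0 < T := by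
    have h1 : 0 < m / (4 * ε) := by positivity
    have h2 := lt_of_lt_of_le h1 hk4
    rw [hT_def]; linarith
  have haak : (a * k) ^ 2 = 16 * T ^ 2 := by
    rw [hT_def, mul_pow, ha2]; ring
  -- Markov / Chebyshev
  have hmarkov : ∀ S : Set ℝ, S ⊆ {z : ℝ | T^2 ≤ z^2} → (ν S).toReal ≤ σsq / T^2 := by
    intro S hsub
    have h1 : (ν S).toReal ≤ (ν {z : ℝ | T^2 ≤ z^2}).toReal :=
      ENNReal.toReal_mono (measure_ne_top _ _) (measure_mono hsub)
    have h2 : T^2 * (ν {x : ℝ | T^2 ≤ x^2}).toReal ≤ σsq := mul_meas_ge_le_integral_of_nonneg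
      (ae_of_all ν fun z => sq_nonneg z) hint (T^2)
    rw [le_div_iff₀ (by positivity)]
    calc (ν S).toReal * T^2 ≤ (ν {z : ℝ | T^2 ≤ z^2}).toReal * T^2 :=
        mul_le_mul_of_nonneg_right h1 (sq_nonneg T)
      _ = T^2 * (ν {z : ℝ | T^2 ≤ z^2}).toReal := by ring
      _ ≤ σsq := h2
  -- group privacy step
  set q : ℕ → ℝ := fun t => (ν (Set.Icc (-T - a * t) (T - a * t))).toReal with hq_def
  have hq_nonneg : ∀ t, 0 ≤ q t := fun t => ENNReal.toReal_nonneg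
  have hq_step : ∀ t : ℕ, q t ≤ Real.exp ε * q (t + 1) + δ := by
    intro t
    set x : Fin n → ℝ := fun i => if i = j then (t : ℝ) else 0 with hx_def
    set x' : Fin n → ℝ := fun i => if i = j then ((t + 1 : ℕ) : ℝ) else 0 with hx'_def
    have hnb : Neighboring x x' := by
      unfold Neighboring
      have h : ∀ i, |x i - x' i| = if i = j then 1 else 0 := by
        intro i
        by_cases h : i = j <;> simp [hx_def, hx'_def, h]
      rw [Finset.sum_congr rfl fun i _ => h i]
      simp
    have hsum : ∀ c : ℝ, (∑ i, w i * (fun i => if i = j then c else 0) i) = a * c := by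
      intro c
      rw [Finset.sum_congr rfl (fun i _ => show w i * (if i = j then c else 0)
        = if i = j then w j * c else 0 by by_cases h : i = j <;> simp [h])]
      simp [Finset.sum_ite_eq', ha_def]
    have hDPt := hDP x x' hnb (Set.Icc (-T) T) measurableSet_Icc
    have hmapx : Measure.map (fun z => (∑ i, w i * x i) + z) ν (Set.Icc (-T) T)
        = ν (Set.Icc (-T - a * t) (T - a * t)) := by
      rw [Measure.map_apply (measurable_const_add _) measurableSet_Icc]
      congr 1
      ext z
      simp only [Set.mem_preimage, Set.mem_Icc, hx_def, hsum (t : ℝ)]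
      constructor <;> intro h <;> exact ⟨by linarith [h.1, h.2], by linarith [h.1, h.2]⟩
    have hmapx' : Measure.map (fun z => (∑ i, w i * x' i) + z) ν (Set.Icc (-T) T)
        = ν (Set.Icc (-T - a * ((t + 1 : ℕ) : ℝ)) (T - a * ((t + 1 : ℕ) : ℝ))) := by
      rw [Measure.map_apply (measurable_const_add _) measurableSet_Icc]
      congr 1
      ext z
      simp only [Set.mem_preimage, Set.mem_Icc, hx'_def, hsum ((t + 1 : ℕ) : ℝ)]
      constructor <;> intro h <;> exact ⟨by linarith [h.1, h.2], by linarith [h.1, h.2]⟩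
    simp only at hDPt
    rw [hmapx, hmapx'] at hDPt
    exact dp_toReal (measure_ne_top _ _) (Real.exp_pos ε).le hδ hDPt
  have hgroup := group_priv (Real.exp_pos ε) hδ q hq_nonneg hq_step
  have hpow : (Real.exp ε) ^ k ≤ Real.exp (1/2 : ℝ) := by
    rw [← Real.exp_nat_mul]
    exact Real.exp_le_exp.mpr (by rw [mul_comm] at hk_ub ⊢; exact hk_ub)
  -- bound the geometric sum by δ'
  have hgeom : δ * ∑ i ∈ Finset.range k, (Real.exp ε) ^ i ≤ δ' := by
    have hsum : ∑ i ∈ Finset.range k, (Real.exp ε) ^ i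
        = ((Real.exp ε) ^ k - 1) / (Real.exp ε - 1) :=
      geom_sum_eq (by linarith) k
    have hc : 0 < Real.exp ε - 1 := by linarith
    rw [hsum, hδ'_def, mul_div_assoc', div_le_div_iff₀ hc hc]
    nlinarith [mul_nonneg hδ hc.le]
  -- Chebyshev bounds on q k and q 0
  have hupper : q k ≤ σsq / T^2 := by
    apply hmarkov
    intro z hz
    simp only [Set.mem_Icc] at hz
    simp only [Set.mem_setOf_eq]
    nlinarith [sq_nonneg (a*(k:ℝ) - 2*(z + a*(k:ℝ))),
      mul_nonneg (by linarith [hz.1, hz.2] : (0:ℝ) ≤ T - (z + a*(k:ℝ)))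
        (by linarith [hz.1, hz.2] : (0:ℝ) ≤ T + (z + a*(k:ℝ))), haak, hT0]
  have hq0 : q 0 = (ν (Set.Icc (-T) T)).toReal := by
    simp [hq_def]
  have hlower : 1 - σsq / T^2 ≤ q 0 := by
    rw [hq0]
    have hcompl : (ν (Set.Icc (-T) T)).toReal = 1 - (ν (Set.Icc (-T) T)ᶜ).toReal := by
      have h := prob_compl_eq_one_sub (μ := ν) (s := Set.Icc (-T) T) measurableSet_Icc
      have h2 : (ν (Set.Icc (-T) T)ᶜ).toReal = 1 - (ν (Set.Icc (-T) T)).toReal := by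
        rw [h, ENNReal.toReal_sub_of_le prob_le_one ENNReal.one_ne_top]; simp
      linarith
    rw [hcompl]
    have h3 : (ν (Set.Icc (-T) T)ᶜ).toReal ≤ σsq / T^2 := by
      apply hmarkov
      intro z hz
      simp only [Set.mem_compl_iff, Set.mem_Icc, not_and_or, not_le] at hz
      simp only [Set.mem_setOf_eq]
      rcases hz with h | h <;> nlinarith
    linarith
  -- combine
  have hmain := hgroup k
  have hfinal : T^2 * (1 - δ') ≤ 3 * σsq := by
    have h1 : (Real.exp ε) ^ k * q k ≤ 2 * (σsq / T^2) := by
      have h0 := hq_nonneg k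
      calc (Real.exp ε) ^ k * q k ≤ 2 * q k :=
            mul_le_mul_of_nonneg_right (hpow.trans hexph2) h0
        _ ≤ 2 * (σsq / T^2) := by linarith
    have h2 : 1 - σsq / T^2 ≤ 2 * (σsq / T^2) + δ' := by linarith
    have h3 : 1 - δ' ≤ 3 * (σsq / T^2) := by linarith
    calc T^2 * (1 - δ') ≤ T^2 * (3 * (σsq / T^2)) :=
        mul_le_mul_of_nonneg_left h3 (sq_nonneg T)
      _ = 3 * σsq := by field_simp
  have hTm : m / (16 * ε) ≤ T := by
    have h4 : m / (16 * ε) = (m / (4 * ε)) / 4 := by ring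
    rw [hT_def, h4]; linarith
  have hB0 : 0 ≤ (1 - δ') * m / (100 * ε) := by positivity
  rw [ge_iff_le, Real.le_sqrt hB0 hsq0]
  have hT2 : (m / (16 * ε))^2 ≤ T^2 := by
    have h0 : 0 ≤ m / (16 * ε) := by positivity
    exact pow_le_pow_left₀ h0 hTm 2
  have key2 : (m / (16*ε))^2 * (1 - δ') ≤ 3 * σsq := by
    calc (m / (16*ε))^2 * (1 - δ') ≤ T^2 * (1 - δ') :=
          mul_le_mul_of_nonneg_right hT2 hδ'1.le
      _ ≤ 3 * σsq := hfinal
  have hu0 : 0 ≤ m^2 / ε^2 := by positivity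
  have e1 : ((1 - δ') * m / (100 * ε))^2 = (1 - δ')^2 * (m^2 / ε^2) / 10000 := by
    field_simp; ring
  have e2 : (m / (16*ε))^2 * (1 - δ') = (1 - δ') * (m^2 / ε^2) / 256 := by
    field_simp; ring
  rw [e1]
  have h5 : (1 - δ')^2 * (m^2 / ε^2) ≤ (1 - δ') * (m^2 / ε^2) := by
    have h6 : (1 - δ')^2 ≤ 1 - δ' := by nlinarith
    exact mul_le_mul_of_nonneg_right h6 hu0
  rw [e2] at key2
  linarith
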